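/- Let H be a separable infinite-dimensional complex Hilbert space and let S ∈ B(H) be a bounded operator such that the commutator [S, T] = ST − TS is a finite-rank operator for every compact operator T ∈ K(H). Then there exists a uniform integer R ≥ 0 such that rank([S, T]) ≤ R for all T ∈ K(H). -/

import Mathlib

/-- A continuous linear operator has finite rank, i.e. finite-dimensional range. -/
def IsFiniteRank {H : Type*} [NormedAddCommGroup H] [InnerProductSpace ℂ H]
    (T : H →L[ℂ] H) : Prop :=
  FiniteDimensional ℂ (LinearMap.range (T : H →ₗ[ℂ] H))

/-- The set of operators of rank at most `n` is closed. -/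
lemma isClosed_rank_le {H : Type*} [NormedAddCommGroup H] [InnerProductSpace ℂ H]
    [CompleteSpace H] (n : ℕ) :
    IsClosed {f : H →L[ℂ] H | LinearMap.rank (f : H →ₗ[ℂ] H) ≤ (n : Cardinal)} := by
  rw [← isOpen_compl_iff]
  have : {f : H →L[ℂ] H | LinearMap.rank (f : H →ₗ[ℂ] H) ≤ (n : Cardinal)}ᶜ
      = {f : H →L[ℂ] H | ((n + 1 : ℕ) : Cardinal) ≤ LinearMap.rank (f : H →ₗ[ℂ] H)} := by
    ext f
    simp only [Set.mem_compl_iff, Set.mem_setOf_eq, not_le, Nat.cast_add, Nat.cast_one,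
      Cardinal.natCast_add_one_le_iff]
  rw [this]
  exact isOpen_setOf_nat_le_rank (n + 1)

theorem uniform_rank_bound_of_finite_rank_commutators
    (H : Type*) [NormedAddCommGroup H] [InnerProductSpace ℂ H] [CompleteSpace H]
    [TopologicalSpace.SeparableSpace H] (hinf : ¬ FiniteDimensional ℂ H)
    (S : H →L[ℂ] H)
    (hS : ∀ T : H →L[ℂ] H, IsCompactOperator ⇑T → IsFiniteRank (S * T - T * S)) :
    ∃ R : ℕ, ∀ T : H →L[ℂ] H, IsCompactOperator ⇑T →
      LinearMap.rank ((S * T - T * S : H →L[ℂ] H) : H →ₗ[ℂ] H) ≤ (R : Cardinal) := by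
  classical
  -- The set of compact operators, as a (closed) subtype
  set K : Set (H →L[ℂ] H) := {T | IsCompactOperator ⇑T} with hKdef
  have hKclosed : IsClosed K := isClosed_setOf_isCompactOperator
  have : CompleteSpace K := hKclosed.completeSpace_coe
  have hK0 : (0 : H →L[ℂ] H) ∈ K := by
    show IsCompactOperator ⇑(0 : H →L[ℂ] H)
    simpa using isCompactOperator_zero
  have : Nonempty K := ⟨⟨0, hK0⟩⟩
  -- the commutator map, continuous
  have hcont : Continuous fun T : H →L[ℂ] H => S * T - T * S :=
    ((continuous_const.mul continuous_id).sub (continuous_id.mul continuous_const))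
  -- the closed pieces
  set E : ℕ → Set K := fun n =>
    {T : K | LinearMap.rank ((S * T.1 - T.1 * S : H →L[ℂ] H) : H →ₗ[ℂ] H) ≤ (n : Cardinal)}
    with hEdef
  have hEclosed : ∀ n, IsClosed (E n) := by
    intro n
    have : E n = (fun T : K => S * T.1 - T.1 * S) ⁻¹'
        {f : H →L[ℂ] H | LinearMap.rank (f : H →ₗ[ℂ] H) ≤ (n : Cardinal)} := rfl
    rw [this]
    exact (isClosed_rank_le n).preimage (hcont.comp continuous_subtype_val)
  have hEunion : ⋃ n, E n = Set.univ := by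
    ext T
    simp only [Set.mem_iUnion, Set.mem_univ, iff_true]
    have hfr : IsFiniteRank (S * T.1 - T.1 * S) := hS T.1 T.2
    have hlt : LinearMap.rank ((S * T.1 - T.1 * S : H →L[ℂ] H) : H →ₗ[ℂ] H) < Cardinal.aleph0 := by
      haveI : FiniteDimensional ℂ
          (LinearMap.range (((S * T.1 - T.1 * S) : H →L[ℂ] H) : H →ₗ[ℂ] H)) := hfr
      exact Module.rank_lt_aleph0 ℂ _
    obtain ⟨n, hn⟩ := Cardinal.lt_aleph0.1 hlt
    exact ⟨n, le_of_eq hn⟩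
  obtain ⟨n, x, hx⟩ := nonempty_interior_of_iUnion_of_closed hEclosed hEunion
  -- extract a ball
  rw [mem_interior_iff_mem_nhds, Metric.mem_nhds_iff] at hx
  obtain ⟨ε, hε, hball⟩ := hx
  -- x itself is in E n
  have hxE : x ∈ E n := hball (Metric.mem_ball_self hε)
  refine ⟨2 * n, fun T hT => ?_⟩
  -- scale T to fit in the ball
  set δ : ℂ := ((ε / (2 * (‖T‖ + 1)) : ℝ) : ℂ) with hδdef
  have hTnorm : (0:ℝ) < ‖T‖ + 1 := by positivity
  have hδpos : (0:ℝ) < ε / (2 * (‖T‖ + 1)) := by positivity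
  have hδ0 : δ ≠ 0 := by
    simp only [hδdef, ne_eq, Complex.ofReal_eq_zero]
    exact ne_of_gt hδpos
  -- x.1 + δ • T is compact
  have hsum : IsCompactOperator ⇑(x.1 + δ • T) := by
    rw [ContinuousLinearMap.coe_add', ContinuousLinearMap.coe_smul']
    exact x.2.add (hT.smul δ)
  -- it lies in the ball
  have hmem : (⟨x.1 + δ • T, hsum⟩ : K) ∈ Metric.ball x ε := by
    rw [Metric.mem_ball, Subtype.dist_eq, dist_eq_norm]
    have : x.1 + δ • T - x.1 = δ • T := by abel
    rw [this, norm_smul]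
    have hδnorm : ‖δ‖ = ε / (2 * (‖T‖ + 1)) := by
      rw [hδdef, Complex.norm_real, Real.norm_eq_abs, abs_of_pos hδpos]
    rw [hδnorm]
    calc ε / (2 * (‖T‖ + 1)) * ‖T‖ ≤ ε / (2 * (‖T‖ + 1)) * (‖T‖ + 1) := by
          apply mul_le_mul_of_nonneg_left (by linarith) (le_of_lt hδpos)
      _ = ε / 2 := by field_simp
      _ < ε := by linarith
  have hsumE : (⟨x.1 + δ • T, hsum⟩ : K) ∈ E n := hball hmem
  -- commutator decomposition: [S, x + δT] = [S,x] + δ • [S,T]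
  have hdecomp : S * (x.1 + δ • T) - (x.1 + δ • T) * S
      = (S * x.1 - x.1 * S) + δ • (S * T - T * S) := by
    simp only [mul_add, add_mul, mul_smul_comm, smul_mul_assoc, smul_sub]
    abel
  -- hence δ • [S,T] = [S, x + δT] - [S, x]
  have key : δ • (S * T - T * S) = (S * (x.1 + δ • T) - (x.1 + δ • T) * S)
      - (S * x.1 - x.1 * S) := by rw [hdecomp]; abel
  -- rank computation
  have hrank_smul : LinearMap.rank ((S * T - T * S : H →L[ℂ] H) : H →ₗ[ℂ] H)
      = LinearMap.rank ((δ • (S * T - T * S) : H →L[ℂ] H) : H →ₗ[ℂ] H) := by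
    unfold LinearMap.rank
    rw [ContinuousLinearMap.coe_smul, LinearMap.range_smul _ δ hδ0]
  rw [hrank_smul, key]
  have h1 : LinearMap.rank (((S * (x.1 + δ • T) - (x.1 + δ • T) * S
        - (S * x.1 - x.1 * S)) : H →L[ℂ] H) : H →ₗ[ℂ] H)
      ≤ LinearMap.rank (((S * (x.1 + δ • T) - (x.1 + δ • T) * S) : H →L[ℂ] H) : H →ₗ[ℂ] H)
        + LinearMap.rank (((S * x.1 - x.1 * S) : H →L[ℂ] H) : H →ₗ[ℂ] H) := by
    rw [sub_eq_add_neg, ContinuousLinearMap.coe_add]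
    refine le_trans (LinearMap.rank_add_le _ _) ?_
    gcongr
    rw [ContinuousLinearMap.coe_neg]
    unfold LinearMap.rank
    rw [LinearMap.range_neg]
  refine le_trans h1 ?_
  have h2 := hsumE
  have h3 := hxE
  simp only [hEdef, Set.mem_setOf_eq] at h2 h3
  calc LinearMap.rank (((S * (x.1 + δ • T) - (x.1 + δ • T) * S) : H →L[ℂ] H) : H →ₗ[ℂ] H)
        + LinearMap.rank (((S * x.1 - x.1 * S) : H →L[ℂ] H) : H →ₗ[ℂ] H)
      ≤ (n : Cardinal) + (n : Cardinal) := add_le_add h2 h3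
    _ = ((2 * n : ℕ) : Cardinal) := by push_cast; ring
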